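/- If w ∈ ℝ^3 \ {0} satisfies E(p+w) = E(p) + E(w) with p ≠ 0, then the angle θ between w and p satisfies sin^2 θ ≥ (2κ2|p|^2 + κ2|w|^2)/(κ1 + 2κ2|p|^2 + 2κ2|w|^2). -/

import Mathlib

noncomputable def Edisp (κ1 κ2 : ℝ) (p : EuclideanSpace ℝ (Fin 3)) : ℝ :=
  Real.sqrt (κ1 * ‖p‖ ^ 2 + κ2 * ‖p‖ ^ 4)

/-- Polynomial core of the resonance bound. -/
lemma resonance_core (κ1 κ2 a b s P : ℝ) (hκ1 : 0 < κ1) (hκ2 : 0 < κ2)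
    (ha : 0 < a) (hb : 0 < b) (hPpos : 0 ≤ P)
    (hP2 : P ^ 2 = (κ1 * a ^ 2 + κ2 * a ^ 4) * (κ1 * b ^ 2 + κ2 * b ^ 4))
    (hq : (κ1 + 2 * κ2 * a ^ 2 + 2 * κ2 * b ^ 2) * s + κ2 * a ^ 2 * b ^ 2
        + 2 * κ2 * s ^ 2 = P)
    (hcs : s ^ 2 ≤ a ^ 2 * b ^ 2) :
    (κ1 + 2 * κ2 * a ^ 2 + 2 * κ2 * b ^ 2) * s ^ 2
      ≤ a ^ 2 * b ^ 2 * (κ1 + κ2 * b ^ 2) := by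
  have hApos : 0 < κ1 + 2 * κ2 * a ^ 2 + 2 * κ2 * b ^ 2 := by positivity
  -- P ≥ κ2 a² b²
  have hPB : κ2 * a ^ 2 * b ^ 2 ≤ P := by
    nlinarith [sq_nonneg (P - κ2 * a ^ 2 * b ^ 2), sq_nonneg (P + κ2 * a ^ 2 * b ^ 2),
      mul_pos (mul_pos hκ1 (pow_pos ha 2)) (mul_pos hκ1 (pow_pos hb 2)),
      mul_pos (mul_pos hκ1 (pow_pos ha 2)) (mul_pos hκ2 (pow_pos hb 4)),
      mul_pos (mul_pos hκ2 (pow_pos ha 4)) (mul_pos hκ1 (pow_pos hb 2))]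
  -- s ≥ 0
  have hs : 0 ≤ s := by
    by_contra h
    push_neg at h
    have hns : -s ≤ a * b := by
      nlinarith [sq_nonneg (s + a * b), mul_pos ha hb]
    have h1 : (κ1 + 2 * κ2 * a ^ 2 + 2 * κ2 * b ^ 2) * (-s) ≤ 2 * κ2 * s ^ 2 := by
      nlinarith
    have h2 : κ1 + 2 * κ2 * a ^ 2 + 2 * κ2 * b ^ 2 ≤ 2 * κ2 * (-s) := by
      have hpos : 0 < -s := neg_pos.mpr h
      rw [← mul_le_mul_iff_of_pos_right hpos]
      nlinarith
    nlinarith [sq_nonneg (a - b), mul_pos ha hb, mul_pos hκ2 (mul_pos ha hb)]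
  -- now s ≥ 0 : A s = P - κ2 a²b² - 2κ2 s², so 0 ≤ A s ≤ P - κ2 a² b²
  have h3 : (κ1 + 2 * κ2 * a ^ 2 + 2 * κ2 * b ^ 2) * s ≤ P - κ2 * a ^ 2 * b ^ 2 := by
    nlinarith [mul_nonneg hκ2.le (sq_nonneg s)]
  have h4 : 0 ≤ (κ1 + 2 * κ2 * a ^ 2 + 2 * κ2 * b ^ 2) * s := mul_nonneg hApos.le hs
  have h5 : (κ1 + 2 * κ2 * a ^ 2 + 2 * κ2 * b ^ 2) ^ 2 * s ^ 2
      ≤ (P - κ2 * a ^ 2 * b ^ 2) ^ 2 := by nlinarith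
  have t1 : 2 * (κ2 * a ^ 2 * b ^ 2) * (κ2 * a ^ 2 * b ^ 2)
      ≤ 2 * (κ2 * a ^ 2 * b ^ 2) * P :=
    mul_le_mul_of_nonneg_left hPB (by positivity)
  have t2 : 0 ≤ a ^ 2 * b ^ 2 * (κ1 + κ2 * b ^ 2) * (κ2 * a ^ 2 + 2 * κ2 * b ^ 2) := by
    positivity
  have h6 : (P - κ2 * a ^ 2 * b ^ 2) ^ 2
      ≤ (κ1 + 2 * κ2 * a ^ 2 + 2 * κ2 * b ^ 2) * (a ^ 2 * b ^ 2 * (κ1 + κ2 * b ^ 2)) := by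
    nlinarith [t1, t2, hP2]
  have h7 : (κ1 + 2 * κ2 * a ^ 2 + 2 * κ2 * b ^ 2)
        * ((κ1 + 2 * κ2 * a ^ 2 + 2 * κ2 * b ^ 2) * s ^ 2)
      ≤ (κ1 + 2 * κ2 * a ^ 2 + 2 * κ2 * b ^ 2)
        * (a ^ 2 * b ^ 2 * (κ1 + κ2 * b ^ 2)) := by nlinarith [h5, h6]
  exact le_of_mul_le_mul_left h7 hApos

/-- Core of the resonance bound, including the division manipulations. -/
lemma resonance_core' (κ1 κ2 a b s P : ℝ) (hκ1 : 0 < κ1) (hκ2 : 0 < κ2)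
    (ha : 0 < a) (hb : 0 < b) (hPpos : 0 ≤ P)
    (hP2 : P ^ 2 = (κ1 * a ^ 2 + κ2 * a ^ 4) * (κ1 * b ^ 2 + κ2 * b ^ 4))
    (hq : (κ1 + 2 * κ2 * a ^ 2 + 2 * κ2 * b ^ 2) * s + κ2 * a ^ 2 * b ^ 2
        + 2 * κ2 * s ^ 2 = P)
    (hcs : s ^ 2 ≤ a ^ 2 * b ^ 2) :
    (2 * κ2 * a ^ 2 + κ2 * b ^ 2) / (κ1 + 2 * κ2 * a ^ 2 + 2 * κ2 * b ^ 2)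
      ≤ 1 - (s / (b * a)) ^ 2 := by
  have key := resonance_core κ1 κ2 a b s P hκ1 hκ2 ha hb hPpos hP2 hq hcs
  have hApos : 0 < κ1 + 2 * κ2 * a ^ 2 + 2 * κ2 * b ^ 2 := by positivity
  have hrw : 1 - (s / (b * a)) ^ 2 = (a ^ 2 * b ^ 2 - s ^ 2) / (a ^ 2 * b ^ 2) := by
    field_simp
  rw [hrw, div_le_div_iff₀ hApos (by positivity)]
  nlinarith [key]

/-- If `w ≠ 0` satisfies `E(p+w) = E(p) + E(w)` with `p ≠ 0`, then the angle θ
between `w` and `p` satisfies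
`sin² θ ≥ (2κ2|p|² + κ2|w|²)/(κ1 + 2κ2|p|² + 2κ2|w|²)`. -/
theorem resonance_sin_sq_bound (κ1 κ2 : ℝ) (hκ1 : 0 < κ1) (hκ2 : 0 < κ2)
    (p w : EuclideanSpace ℝ (Fin 3)) (hp : p ≠ 0) (hw : w ≠ 0)
    (hres : Edisp κ1 κ2 (p + w) = Edisp κ1 κ2 p + Edisp κ1 κ2 w) :
    (2 * κ2 * ‖p‖ ^ 2 + κ2 * ‖w‖ ^ 2) /
        (κ1 + 2 * κ2 * ‖p‖ ^ 2 + 2 * κ2 * ‖w‖ ^ 2) ≤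
      1 - ((inner ℝ w p : ℝ) / (‖w‖ * ‖p‖)) ^ 2 := by
  have ha : 0 < ‖p‖ := norm_pos_iff.mpr hp
  have hb : 0 < ‖w‖ := norm_pos_iff.mpr hw
  have hcs : (inner ℝ w p : ℝ) ^ 2 ≤ ‖p‖ ^ 2 * ‖w‖ ^ 2 := by
    have h := abs_real_inner_le_norm w p
    have h2 : |(inner ℝ w p : ℝ)| ^ 2 ≤ (‖w‖ * ‖p‖) ^ 2 :=
      pow_le_pow_left₀ (abs_nonneg _) h 2
    rw [sq_abs] at h2
    nlinarith
  have hc : (inner ℝ p w : ℝ) = inner ℝ w p := real_inner_comm w p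
  have hn : ‖p + w‖ ^ 2 = ‖p‖ ^ 2 + ‖w‖ ^ 2 + 2 * (inner ℝ w p : ℝ) := by
    rw [norm_add_sq_real, hc]
    ring
  have hXpos : 0 ≤ κ1 * ‖p + w‖ ^ 2 + κ2 * ‖p + w‖ ^ 4 := by positivity
  have hYpos : 0 ≤ κ1 * ‖p‖ ^ 2 + κ2 * ‖p‖ ^ 4 := by positivity
  have hZpos : 0 ≤ κ1 * ‖w‖ ^ 2 + κ2 * ‖w‖ ^ 4 := by positivity
  have hres' : Real.sqrt (κ1 * ‖p + w‖ ^ 2 + κ2 * ‖p + w‖ ^ 4)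
      = Real.sqrt (κ1 * ‖p‖ ^ 2 + κ2 * ‖p‖ ^ 4)
        + Real.sqrt (κ1 * ‖w‖ ^ 2 + κ2 * ‖w‖ ^ 4) := hres
  have hXval : κ1 * ‖p + w‖ ^ 2 + κ2 * ‖p + w‖ ^ 4
      = (κ1 * ‖p‖ ^ 2 + κ2 * ‖p‖ ^ 4) + (κ1 * ‖w‖ ^ 2 + κ2 * ‖w‖ ^ 4)
        + 2 * (Real.sqrt (κ1 * ‖p‖ ^ 2 + κ2 * ‖p‖ ^ 4)
            * Real.sqrt (κ1 * ‖w‖ ^ 2 + κ2 * ‖w‖ ^ 4)) := by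
    conv_lhs => rw [← Real.sq_sqrt hXpos, hres']
    rw [add_sq, Real.sq_sqrt hYpos, Real.sq_sqrt hZpos]
    ring
  have hPpos : 0 ≤ Real.sqrt (κ1 * ‖p‖ ^ 2 + κ2 * ‖p‖ ^ 4)
      * Real.sqrt (κ1 * ‖w‖ ^ 2 + κ2 * ‖w‖ ^ 4) :=
    mul_nonneg (Real.sqrt_nonneg _) (Real.sqrt_nonneg _)
  have hP2 : (Real.sqrt (κ1 * ‖p‖ ^ 2 + κ2 * ‖p‖ ^ 4)
      * Real.sqrt (κ1 * ‖w‖ ^ 2 + κ2 * ‖w‖ ^ 4)) ^ 2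
      = (κ1 * ‖p‖ ^ 2 + κ2 * ‖p‖ ^ 4) * (κ1 * ‖w‖ ^ 2 + κ2 * ‖w‖ ^ 4) := by
    rw [mul_pow, Real.sq_sqrt hYpos, Real.sq_sqrt hZpos]
  have h4 : ‖p + w‖ ^ 4 = (‖p‖ ^ 2 + ‖w‖ ^ 2 + 2 * (inner ℝ w p : ℝ)) ^ 2 := by
    rw [show ‖p + w‖ ^ 4 = (‖p + w‖ ^ 2) ^ 2 by ring, hn]
  have hq : (κ1 + 2 * κ2 * ‖p‖ ^ 2 + 2 * κ2 * ‖w‖ ^ 2) * (inner ℝ w p : ℝ)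
      + κ2 * ‖p‖ ^ 2 * ‖w‖ ^ 2 + 2 * κ2 * (inner ℝ w p : ℝ) ^ 2
      = Real.sqrt (κ1 * ‖p‖ ^ 2 + κ2 * ‖p‖ ^ 4)
        * Real.sqrt (κ1 * ‖w‖ ^ 2 + κ2 * ‖w‖ ^ 4) := by
    rw [hn, h4] at hXval
    nlinarith [hXval]
  exact resonance_core' κ1 κ2 ‖p‖ ‖w‖ (inner ℝ w p)
    (Real.sqrt (κ1 * ‖p‖ ^ 2 + κ2 * ‖p‖ ^ 4) * Real.sqrt (κ1 * ‖w‖ ^ 2 + κ2 * ‖w‖ ^ 4))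
    hκ1 hκ2 ha hb hPpos hP2 hq hcs
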